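/- Fix an integer k ≥ 0, and define operators T_0, T_1 on L²(𝕋) by (T_0 f)(z) = f(z²) and (T_1 f)(z) = z^{2k+1} f(z²). Then T_0 and T_1 satisfy the Cuntz relations: T_j*T_i = δ_{i,j}·Id for i,j ∈ {0,1}, and T_0T_0* + T_1T_1* = Id. -/

import Mathlib

open MeasureTheory Complex Real
open scoped ComplexConjugate

set_option synthInstance.maxHeartbeats 1000000
set_option maxHeartbeats 1600000

noncomputable section

instance : Fact (0 < 2 * π) := ⟨by positivity⟩

namespace Stmt12Aux

open Submodule Set

abbrev Hsp := Lp ℂ 2 (volume : Measure (AddCircle (2 * π)))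

def myE (n : ℤ) : Hsp :=
  ((Real.sqrt (2*π) : ℂ))⁻¹ • ContinuousMap.toLp 2 volume ℂ (fourier n)

theorem orthonormal_myE : Orthonormal ℂ myE := by
  rw [orthonormal_iff_ite]
  intro i j
  unfold myE
  rw [inner_smul_left, inner_smul_right,
    ContinuousMap.inner_toLp (volume : Measure (AddCircle (2*π))) (fourier i) (fourier j)]
  simp_rw [← fourier_neg, ← fourier_add]
  split_ifs with h
  · simp_rw [h, add_neg_cancel]
    have : ⇑(fourier 0 : C(AddCircle (2*π), ℂ)) = (fun _ => 1) := by ext1; exact fourier_zero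
    rw [this, integral_const, measureReal_def, AddCircle.measure_univ, Complex.real_smul, mul_one,
      starRingEnd_apply, star_inv₀]
    have h1 : star ((Real.sqrt (2*π) : ℂ)) = (Real.sqrt (2*π) : ℂ) := by
      rw [star_def, Complex.conj_ofReal]
    rw [h1, ← mul_assoc, ← mul_inv]
    norm_cast
    rw [Real.mul_self_sqrt (by positivity), ENNReal.toReal_ofReal (by positivity)]
    rw [inv_mul_cancel₀ (by positivity)]
  · have hij : -i + j ≠ 0 := by rw [add_comm]; exact sub_ne_zero.mpr (Ne.symm h)
    rw [add_comm j (-i)]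
    rw [integral_eq_zero_of_add_right_eq_neg (μ := (volume : Measure (AddCircle (2*π))))
      (fourier_add_half_inv_index hij (by positivity))]
    simp

theorem dense_myE : (span ℂ (range myE)).topologicalClosure = ⊤ := by
  have hdr : DenseRange (ContinuousMap.toLp (E := ℂ) 2
      (volume : Measure (AddCircle (2*π))) ℂ) :=
    ContinuousMap.toLp_denseRange ℂ (volume : Measure (AddCircle (2*π))) ℂ (by simp)
  have h1 : (span ℂ (range (fun n => ContinuousMap.toLp (E := ℂ) 2
      (volume : Measure (AddCircle (2*π))) ℂ (fourier n)))).topologicalClosure = ⊤ := by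
    convert hdr.topologicalClosure_map_submodule span_fourier_closure_eq_top using 2
    · rfl
    erw [map_span, range_comp]
    simp only [ContinuousLinearMap.coe_coe]
  rw [← h1]
  apply le_antisymm _ ?_
  · exact le_top.trans (by rw [h1])
  · apply Submodule.topologicalClosure_mono
    apply span_le.mpr
    rintro x ⟨n, rfl⟩
    show ContinuousMap.toLp (E := ℂ) 2 (volume : Measure (AddCircle (2*π))) ℂ (fourier n) ∈ _
    have : ContinuousMap.toLp (E := ℂ) 2 (volume : Measure (AddCircle (2*π))) ℂ (fourier n)
        = (Real.sqrt (2*π) : ℂ) • myE n := by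
      rw [myE, smul_smul, mul_inv_cancel₀ (by norm_cast; positivity), one_smul]
    rw [this]
    exact Submodule.smul_mem _ _ (subset_span ⟨n, rfl⟩)

def myB : HilbertBasis ℤ ℂ Hsp := HilbertBasis.mk orthonormal_myE dense_myE.ge

theorem myB_apply (n : ℤ) : myB n = myE n := by
  rw [myB, HilbertBasis.coe_mk]

theorem coeFn_myB (n : ℤ) :
    ⇑(myB n) =ᵐ[volume] fun t => ((Real.sqrt (2*π) : ℂ))⁻¹ * fourier n t := by
  rw [myB_apply]
  filter_upwards [Lp.coeFn_smul ((Real.sqrt (2*π) : ℂ))⁻¹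
      (ContinuousMap.toLp (E := ℂ) 2 (volume : Measure (AddCircle (2*π))) ℂ (fourier n)),
    ContinuousMap.coeFn_toLp (volume : Measure (AddCircle (2*π))) (𝕜 := ℂ) (p := 2)
      (fourier n : C(AddCircle (2*π), ℂ))] with t h1 h2
  rw [myE, h1, Pi.smul_apply, h2, smul_eq_mul]

theorem mp_double : MeasurePreserving (fun t : AddCircle (2*π) => (2:ℕ) • t) volume volume := by
  have : (fun t : AddCircle (2*π) => (2:ℕ) • t) = (fun t : AddCircle (2*π) => (2:ℤ) • t) := by
    funext t; exact (natCast_zsmul t 2).symm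
  rw [this]
  exact MeasureTheory.Measure.measurePreserving_zsmul volume (by norm_num)

theorem comp_double {f : AddCircle (2*π) → ℂ} {g : AddCircle (2*π) → ℂ}
    (h : f =ᵐ[volume] g) :
    (fun t : AddCircle (2*π) => f (2 • t)) =ᵐ[volume] (fun t => g (2 • t)) :=
  mp_double.quasiMeasurePreserving.ae_eq_comp h

theorem fourier_double (n : ℤ) (t : AddCircle (2*π)) :
    fourier n (2 • t) = fourier (2*n) t := by
  rw [fourier_apply, fourier_apply, ← natCast_zsmul t 2, smul_smul]
  norm_num [mul_comm]

theorem hdense : Dense ((span ℂ (Set.range ⇑myB) : Submodule ℂ Hsp) : Set Hsp) := by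
  have h := congrArg (SetLike.coe) myB.dense_span
  rw [Submodule.topologicalClosure_coe, Submodule.top_coe] at h
  exact dense_iff_closure_eq.mpr h

theorem hrepr (i j : ℤ) : myB.repr (myB j) i = if i = j then (1:ℂ) else 0 := by
  rw [myB.repr_apply_apply]
  exact orthonormal_iff_ite.mp myB.orthonormal i j

end Stmt12Aux

open Stmt12Aux


/-- For `k ≥ 0`, the generalized Haar operators
`(T₀f)(z) = f(z²)` and `(T₁f)(z) = z^{2k+1} f(z²)` on `L²(𝕋)` (with
`𝕋 = ℝ/2πℤ`, where `z^{2k+1}` corresponds to the character `fourier (2k+1)`)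
satisfy the Cuntz relations `Tⱼ*Tᵢ = δ_{i,j}·Id` and `T₀T₀* + T₁T₁* = Id`. -/
theorem stmt12 (k : ℕ)
    (T0 T1 : Lp ℂ 2 (volume : Measure (AddCircle (2 * π)))
      →L[ℂ] Lp ℂ 2 (volume : Measure (AddCircle (2 * π))))
    (hT0 : ∀ f : Lp ℂ 2 (volume : Measure (AddCircle (2 * π))),
      ⇑(T0 f) =ᵐ[volume] fun t => f (2 • t))
    (hT1 : ∀ f : Lp ℂ 2 (volume : Measure (AddCircle (2 * π))),
      ⇑(T1 f) =ᵐ[volume] fun t => (fourier (2 * k + 1) t : ℂ) * f (2 • t)) :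
    ContinuousLinearMap.adjoint T0 ∘L T0 = 1 ∧
    ContinuousLinearMap.adjoint T1 ∘L T1 = 1 ∧
    ContinuousLinearMap.adjoint T0 ∘L T1 = 0 ∧
    ContinuousLinearMap.adjoint T1 ∘L T0 = 0 ∧
    T0 ∘L ContinuousLinearMap.adjoint T0 + T1 ∘L ContinuousLinearMap.adjoint T1 = 1 := by
  have hA0 : ∀ n : ℤ, T0 (myB n) = myB (2*n) := by
    intro n
    apply Lp.ext_iff.mpr
    filter_upwards [hT0 (myB n), comp_double (coeFn_myB n), coeFn_myB (2*n)] with t h1 h2 h3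
    rw [h1, h2, h3, fourier_double]
  have hA1 : ∀ n : ℤ, T1 (myB n) = myB (2*n + (2*(k:ℤ)+1)) := by
    intro n
    apply Lp.ext_iff.mpr
    filter_upwards [hT1 (myB n), comp_double (coeFn_myB n),
      coeFn_myB (2*n + (2*(k:ℤ)+1))] with t h1 h2 h3
    rw [h1, h2, fourier_double, h3, fourier_add (m := 2*n) (n := 2*(k:ℤ)+1)]
    ring
  have hadj0 : ∀ (x : Hsp) (n : ℤ),
      myB.repr ((ContinuousLinearMap.adjoint T0) x) n = myB.repr x (2*n) := by
    intro x n
    rw [myB.repr_apply_apply, myB.repr_apply_apply, ContinuousLinearMap.adjoint_inner_right,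
      hA0]
  have hadj1 : ∀ (x : Hsp) (n : ℤ),
      myB.repr ((ContinuousLinearMap.adjoint T1) x) n = myB.repr x (2*n + (2*(k:ℤ)+1)) := by
    intro x n
    rw [myB.repr_apply_apply, myB.repr_apply_apply, ContinuousLinearMap.adjoint_inner_right,
      hA1]
  refine ⟨?_, ?_, ?_, ?_, ?_⟩
  · apply ContinuousLinearMap.ext_on hdense
    rintro x ⟨n, rfl⟩
    apply myB.repr.injective
    ext m
    simp only [ContinuousLinearMap.comp_apply, ContinuousLinearMap.one_apply]
    rw [hA0, hadj0, hrepr, hrepr]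
    have : (2*m = 2*n) ↔ (m = n) := by omega
    rw [if_congr this rfl rfl]
  · apply ContinuousLinearMap.ext_on hdense
    rintro x ⟨n, rfl⟩
    apply myB.repr.injective
    ext m
    simp only [ContinuousLinearMap.comp_apply, ContinuousLinearMap.one_apply]
    rw [hA1, hadj1, hrepr, hrepr]
    have : (2*m + (2*(k:ℤ)+1) = 2*n + (2*(k:ℤ)+1)) ↔ (m = n) := by omega
    rw [if_congr this rfl rfl]
  · apply ContinuousLinearMap.ext_on hdense
    rintro x ⟨n, rfl⟩
    apply myB.repr.injective
    ext m
    simp only [ContinuousLinearMap.comp_apply, ContinuousLinearMap.zero_apply, map_zero]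
    rw [hA1, hadj0, hrepr, if_neg (by omega)]
    simp
  · apply ContinuousLinearMap.ext_on hdense
    rintro x ⟨n, rfl⟩
    apply myB.repr.injective
    ext m
    simp only [ContinuousLinearMap.comp_apply, ContinuousLinearMap.zero_apply, map_zero]
    rw [hA0, hadj1, hrepr, if_neg (by omega)]
    simp
  · apply ContinuousLinearMap.ext_on hdense
    rintro x ⟨n, rfl⟩
    simp only [ContinuousLinearMap.add_apply, ContinuousLinearMap.comp_apply,
      ContinuousLinearMap.one_apply]
    rcases Int.even_or_odd n with ⟨j, hj⟩ | ⟨j, hj⟩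
    · have h1 : (ContinuousLinearMap.adjoint T0) (myB n) = myB j := by
        apply myB.repr.injective
        ext m
        rw [hadj0, hrepr, hrepr]
        have : (2*m = n) ↔ (m = j) := by omega
        rw [if_congr this rfl rfl]
      have h2 : (ContinuousLinearMap.adjoint T1) (myB n) = 0 := by
        apply myB.repr.injective
        ext m
        rw [hadj1, hrepr, if_neg (by omega), map_zero]
        simp
      rw [h1, h2, map_zero, add_zero, hA0]
      congr 1
      omega
    · have h1 : (ContinuousLinearMap.adjoint T0) (myB n) = 0 := by
        apply myB.repr.injective
        ext m
        rw [hadj0, hrepr, if_neg (by omega), map_zero]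
        simp
      have h2 : (ContinuousLinearMap.adjoint T1) (myB n) = myB (j - k) := by
        apply myB.repr.injective
        ext m
        rw [hadj1, hrepr, hrepr]
        have : (2*m + (2*(k:ℤ)+1) = n) ↔ (m = j - k) := by omega
        rw [if_congr this rfl rfl]
      rw [h1, h2, map_zero, zero_add, hA1]
      congr 1
      omega
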